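/- If K is a subgroup with H ≤ K ≤ G, then extension of functions by zero (via the inclusion K/H ↪ G/H) defines an injective R-algebra homomorphism from H_R(K,H,A,α|_K) into H_R(G,H,A,α). -/
import Mathlib


open scoped BigOperators

def SkewHecke.IsInv {R A G : Type*} [CommRing R] [Ring A] [Algebra R A] [Group G]
    (H : Subgroup G) (α : G →* (A ≃ₐ[R] A)) (φ : G ⧸ H → A) : Prop :=
  ∀ h ∈ H, ∀ g : G, φ (QuotientGroup.mk (h * g)) = α h (φ (QuotientGroup.mk g))

def SkewHecke.IsSection {G : Type*} [Group G] {H : Subgroup G} (s : G ⧸ H → G) : Prop :=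
  ∀ c : G ⧸ H, QuotientGroup.mk (s c) = c

noncomputable def SkewHecke.conv {R A G : Type*} [CommRing R] [Ring A] [Algebra R A] [Group G]
    (H : Subgroup G) [Fintype (G ⧸ H)] (α : G →* (A ≃ₐ[R] A))
    (s : G ⧸ H → G) (φ ψ : G ⧸ H → A) : G ⧸ H → A :=
  fun x => ∑ c : G ⧸ H, φ c * α (s c) (ψ ((s c)⁻¹ • x))

noncomputable def SkewHecke.delta {A G : Type*} [Ring A] [Group G] (H : Subgroup G)
    (a : A) : G ⧸ H → A := by
  classical exact fun x => if x = QuotientGroup.mk (1 : G) then a else 0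

/-- For `H ≤ K ≤ G`, extension of functions by zero along the inclusion `K/H ↪ G/H` is an
injective `R`-algebra homomorphism `H_R(K,H,A,α|_K) → H_R(G,H,A,α)`. -/
theorem skewHecke_intermediate_subgroup_embedding {R A G : Type*} [CommRing R] [Ring A]
    [Algebra R A] [Group G] (K H : Subgroup G) (hHK : H ≤ K)
    [Fintype (G ⧸ H)] [Fintype (K ⧸ H.subgroupOf K)]
    (α : G →* (A ≃ₐ[R] A))
    (sG : G ⧸ H → G) (hsG : SkewHecke.IsSection sG)
    (sK : K ⧸ H.subgroupOf K → K) (hsK : SkewHecke.IsSection sK) :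
    ∃ (ι : K ⧸ H.subgroupOf K → G ⧸ H) (E : (K ⧸ H.subgroupOf K → A) → (G ⧸ H → A)),
      -- `ι` is the natural injection `K/H ↪ G/H`
      (∀ k : K, ι (QuotientGroup.mk k) = QuotientGroup.mk (k : G)) ∧
      Function.Injective ι ∧
      -- `E` is extension by zero
      (∀ (φ : K ⧸ H.subgroupOf K → A) (y : K ⧸ H.subgroupOf K), E φ (ι y) = φ y) ∧
      (∀ (φ : K ⧸ H.subgroupOf K → A) (x : G ⧸ H), x ∉ Set.range ι → E φ x = 0) ∧
      -- `E` maps the smaller skew Hecke algebra into the larger one, injectively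
      (∀ φ, SkewHecke.IsInv (H.subgroupOf K) (α.comp K.subtype) φ →
        SkewHecke.IsInv H α (E φ)) ∧
      Set.InjOn E {φ | SkewHecke.IsInv (H.subgroupOf K) (α.comp K.subtype) φ} ∧
      -- `E` is `R`-linear on invariant functions
      (∀ φ ψ, SkewHecke.IsInv (H.subgroupOf K) (α.comp K.subtype) φ →
        SkewHecke.IsInv (H.subgroupOf K) (α.comp K.subtype) ψ →
        E (φ + ψ) = E φ + E ψ) ∧
      (∀ (r : R) (φ), SkewHecke.IsInv (H.subgroupOf K) (α.comp K.subtype) φ →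
        E (r • φ) = r • E φ) ∧
      -- `E` is multiplicative and unital
      (∀ φ ψ, SkewHecke.IsInv (H.subgroupOf K) (α.comp K.subtype) φ →
        SkewHecke.IsInv (H.subgroupOf K) (α.comp K.subtype) ψ →
        E (SkewHecke.conv (H.subgroupOf K) (α.comp K.subtype) sK φ ψ) =
          SkewHecke.conv H α sG (E φ) (E ψ)) ∧
      E (SkewHecke.delta (H.subgroupOf K) (1 : A)) = SkewHecke.delta H (1 : A) := by

  classical
  -- the inclusion `K/(H.subgroupOf K) -> G/H`
  let ι : K ⧸ (H.subgroupOf K) → G ⧸ H :=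
    Quotient.map' (Subtype.val : K → G) (fun a b hab => by
      rw [QuotientGroup.leftRel_apply] at hab ⊢
      exact hab)
  have hι : ∀ k : K, ι (QuotientGroup.mk k) = QuotientGroup.mk (k : G) := fun k => rfl
  have hιinj : Function.Injective ι := by
    intro a b hab
    induction a using Quotient.inductionOn' with
    | h a =>
      induction b using Quotient.inductionOn' with
      | h b =>
        rw [show (Quotient.mk'' a : K ⧸ (H.subgroupOf K)) = QuotientGroup.mk a from rfl,
          show (Quotient.mk'' b : K ⧸ (H.subgroupOf K)) = QuotientGroup.mk b from rfl, hι, hι,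
          QuotientGroup.eq] at hab
        exact QuotientGroup.eq.mpr (by simpa [Subgroup.mem_subgroupOf] using hab)
  have hrange : ∀ g : G, (QuotientGroup.mk g : G ⧸ H) ∈ Set.range ι ↔ g ∈ K := by
    intro g
    constructor
    · rintro ⟨y, hy⟩
      induction y using Quotient.inductionOn' with
      | h k =>
        rw [show (Quotient.mk'' k : K ⧸ (H.subgroupOf K)) = QuotientGroup.mk k from rfl, hι] at hy
        have : (k : G)⁻¹ * g ∈ H := QuotientGroup.eq.mp hy
        have := hHK this
        have : (k : G) * ((k : G)⁻¹ * g) ∈ K := K.mul_mem k.2 this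
        simpa using this
    · intro hg
      exact ⟨QuotientGroup.mk (⟨g, hg⟩ : K), hι _⟩
  -- extension by zero
  let E : (K ⧸ (H.subgroupOf K) → A) → (G ⧸ H → A) := fun φ x =>
    if hx : ∃ y, ι y = x then φ hx.choose else 0
  have hEι : ∀ (φ : K ⧸ (H.subgroupOf K) → A) (y : K ⧸ (H.subgroupOf K)), E φ (ι y) = φ y := by
    intro φ y
    have hx : ∃ z, ι z = ι y := ⟨y, rfl⟩
    have : hx.choose = y := hιinj hx.choose_spec
    simp only [E, dif_pos hx, this]
  have hE0 : ∀ (φ : K ⧸ (H.subgroupOf K) → A) (x : G ⧸ H), x ∉ Set.range ι → E φ x = 0 := by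
    intro φ x hx
    exact dif_neg (fun ⟨y, hy⟩ => hx ⟨y, hy⟩)
  -- ι is K-equivariant
  have hιsmul : ∀ (k : K) (y : K ⧸ (H.subgroupOf K)), ι (k • y) = (k : G) • ι y := by
    intro k y
    induction y using Quotient.inductionOn' with
    | h a =>
      rw [show (Quotient.mk'' a : K ⧸ (H.subgroupOf K)) = QuotientGroup.mk a from rfl,
        MulAction.Quotient.smul_mk, hι, hι, MulAction.Quotient.smul_mk]
      rfl
  -- invariance at quotient points
  have hinvpt : ∀ (ψ : K ⧸ (H.subgroupOf K) → A), SkewHecke.IsInv (H.subgroupOf K) (α.comp K.subtype) ψ →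
      ∀ h : K, h ∈ (H.subgroupOf K) → ∀ z : K ⧸ (H.subgroupOf K), ψ (h • z) = α (h : G) (ψ z) := by
    intro ψ hψ h hh z
    induction z using Quotient.inductionOn' with
    | h a =>
      rw [show (Quotient.mk'' a : K ⧸ (H.subgroupOf K)) = QuotientGroup.mk a from rfl,
        MulAction.Quotient.smul_mk]
      exact hψ h hh a
  refine ⟨ι, E, hι, hιinj, hEι, hE0, ?_, ?_, ?_, ?_, ?_, ?_⟩
  · -- invariance is preserved
    intro φ hφ h hh g
    by_cases hg : g ∈ K
    · have hmul : (h : G) * g = ((⟨h, hHK hh⟩ * ⟨g, hg⟩ : K) : G) := rfl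
      have h1 : (QuotientGroup.mk (h * g) : G ⧸ H) = ι (QuotientGroup.mk (⟨h, hHK hh⟩ * ⟨g, hg⟩ : K)) := by
        rw [hι, hmul]
      have h2 : (QuotientGroup.mk g : G ⧸ H) = ι (QuotientGroup.mk (⟨g, hg⟩ : K)) := rfl
      rw [h1, h2, hEι, hEι]
      have := hφ (⟨h, hHK hh⟩ : K) (by simpa [Subgroup.mem_subgroupOf] using hh) (⟨g, hg⟩ : K)
      simpa using this
    · have h1 : (QuotientGroup.mk (h * g) : G ⧸ H) ∉ Set.range ι := by
        rw [hrange]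
        intro hmem
        exact hg (by simpa using K.mul_mem (K.inv_mem (hHK hh)) hmem)
      have h2 : (QuotientGroup.mk g : G ⧸ H) ∉ Set.range ι := by
        rw [hrange]; exact hg
      rw [hE0 _ _ h1, hE0 _ _ h2, map_zero]
  · -- injectivity on invariant functions
    intro φ _ ψ _ h
    funext y
    have := congrFun h (ι y)
    rwa [hEι, hEι] at this
  · -- additivity
    intro φ ψ _ _
    funext x
    by_cases hx : x ∈ Set.range ι
    · obtain ⟨y, rfl⟩ := hx
      simp [hEι]
    · simp [hE0 _ _ hx]
  · -- scalar multiplication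
    intro r φ _
    funext x
    by_cases hx : x ∈ Set.range ι
    · obtain ⟨y, rfl⟩ := hx
      simp [hEι]
    · simp [hE0 _ _ hx]
  · -- multiplicativity
    intro φ ψ hφ hψ
    funext x
    by_cases hx : x ∈ Set.range ι
    · obtain ⟨xh, rfl⟩ := hx
      rw [hEι]
      show SkewHecke.conv (H.subgroupOf K) (α.comp K.subtype) sK φ ψ xh = _
      unfold SkewHecke.conv
      have hzero : ∀ c ∈ Finset.univ \ Finset.univ.image ι,
          E φ c * α (sG c) (E ψ ((sG c)⁻¹ • ι xh)) = 0 := by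
        intro c hc
        simp only [Finset.mem_sdiff, Finset.mem_image] at hc
        have : c ∉ Set.range ι := by
          rintro ⟨y, rfl⟩
          exact hc.2 ⟨y, Finset.mem_univ y, rfl⟩
        rw [hE0 _ _ this, zero_mul]
      rw [show (∑ c : G ⧸ H, E φ c * α (sG c) (E ψ ((sG c)⁻¹ • ι xh)))
          = ∑ c ∈ Finset.univ.image ι, E φ c * α (sG c) (E ψ ((sG c)⁻¹ • ι xh)) from
        (Finset.sum_subset (Finset.subset_univ _) (fun c _ hc =>
          hzero c (Finset.mem_sdiff.mpr ⟨Finset.mem_univ c, hc⟩))).symm,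
        Finset.sum_image (fun a _ b _ h => hιinj h)]
      refine Finset.sum_congr rfl fun y _ => ?_
      -- termwise comparison
      have hgK : sG (ι y) ∈ K := by
        rw [← hrange]
        rw [hsG (ι y)]
        exact ⟨y, rfl⟩
      set κ : K := ⟨sG (ι y), hgK⟩ with hκ
      have hκy : (QuotientGroup.mk κ : K ⧸ (H.subgroupOf K)) = y := by
        apply hιinj
        rw [hι]
        exact hsG (ι y)
      have hky : (QuotientGroup.mk (sK y) : K ⧸ (H.subgroupOf K)) = y := hsK y
      have hhmem : (sK y)⁻¹ * κ ∈ (H.subgroupOf K) := QuotientGroup.eq.mp (hky.trans hκy.symm)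
      set h : K := (sK y)⁻¹ * κ with hh
      have hκeq : κ = sK y * h := by rw [hh]; group
      have hEψ : E ψ ((sG (ι y))⁻¹ • ι xh) = ψ (κ⁻¹ • xh) := by
        rw [show (sG (ι y))⁻¹ • ι xh = ι (κ⁻¹ • xh) by
          rw [hιsmul]; rfl]
        exact hEι _ _
      rw [hEι, hEψ]
      congr 1
      have hκinv : κ⁻¹ • xh = h⁻¹ • ((sK y)⁻¹ • xh) := by
        rw [hκeq, mul_inv_rev, mul_smul]
      symm
      rw [hκinv, hinvpt ψ hψ h⁻¹ ((H.subgroupOf K).inv_mem hhmem)]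
      have hmul : sG (ι y) * ((h⁻¹ : K) : G) = ((sK y : K) : G) := by
        have h1 : (κ : G) = (sK y : G) * (h : G) := by rw [hκeq]; rfl
        have h2 : ((h⁻¹ : K) : G) = ((h : G))⁻¹ := rfl
        rw [h2, show sG (ι y) = (κ : G) from rfl, h1, mul_inv_cancel_right]
      have hstep : α (sG (ι y)) (α ((h⁻¹ : K) : G) (ψ ((sK y)⁻¹ • xh)))
          = α (sG (ι y) * ((h⁻¹ : K) : G)) (ψ ((sK y)⁻¹ • xh)) := by
        rw [map_mul]; rfl
      rw [hstep, hmul]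
      rfl
    · rw [hE0 _ _ hx]
      unfold SkewHecke.conv
      symm
      apply Finset.sum_eq_zero
      intro c _
      by_cases hc : c ∈ Set.range ι
      · obtain ⟨y, rfl⟩ := hc
        have hgK : sG (ι y) ∈ K := by
          rw [← hrange, hsG (ι y)]
          exact ⟨y, rfl⟩
        have : (sG (ι y))⁻¹ • x ∉ Set.range ι := by
          rintro ⟨z, hz⟩
          apply hx
          have : x = sG (ι y) • ((sG (ι y))⁻¹ • x) := by rw [smul_inv_smul]
          rw [this, ← hz, show sG (ι y) • ι z = ι ((⟨sG (ι y), hgK⟩ : K) • z) from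
            (hιsmul (⟨sG (ι y), hgK⟩ : K) z).symm]
          exact ⟨_, rfl⟩
        rw [hE0 _ _ this, map_zero, mul_zero]
      · rw [hE0 _ _ hc, zero_mul]
  · -- unitality
    funext x
    by_cases hx : x ∈ Set.range ι
    · obtain ⟨y, rfl⟩ := hx
      rw [hEι]
      unfold SkewHecke.delta
      have : ι y = QuotientGroup.mk (1 : G) ↔ y = QuotientGroup.mk (1 : K) := by
        constructor
        · intro h
          apply hιinj
          rw [h, hι]
          rfl
        · intro h
          rw [h, hι]
          rfl
      simp only [this]
    · rw [hE0 _ _ hx]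
      unfold SkewHecke.delta
      rw [if_neg]
      intro h
      apply hx
      rw [h]
      exact ⟨QuotientGroup.mk (1 : K), by rw [hι]; rfl⟩
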